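/- Define the Hodge star as the k[x]-linear map from k[x_1,...,x_n,θ_1,...,θ_n] to k[x_1,...,x_n,ψ_1,...,ψ_n] sending θ_I to (-1)^{deg(I)}ψ_{[n]\I} where deg(I) = Σ_{i∈I}(i−1). Then for all f, g in k[x,θ], f ⊙ (★g) = ★(f·g), where f·g is the action substituting ∂^x and contraction ∂^θ, and f ⊙ h is the action substituting ∂^x and left-multiplication by ψ. -/
import Mathlib


open Finset

/-- The super-polynomial ring `k[x₁,…,xₙ,θ₁,…,θₙ]` (resp. `k[x,ψ]`), modelled on its
monomial basis `x^α θ_I` (resp. `x^α ψ_I`) indexed by pairs `(α, I)`. -/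
abbrev SuperPoly (n : ℕ) := ((Fin n →₀ ℕ) × Finset (Fin n)) →₀ ℂ

variable (n : ℕ)

/-- Partial differentiation `∂/∂xᵢ`. -/
noncomputable def opX (i : Fin n) : Module.End ℂ (SuperPoly n) :=
  Finsupp.lsum ℂ fun b =>
    ((b.1 i : ℂ)) • Finsupp.lsingle (b.1.update i (b.1 i - 1), b.2)

/-- Contraction `∂/∂θᵢ`. -/
noncomputable def opTheta (i : Fin n) : Module.End ℂ (SuperPoly n) :=
  Finsupp.lsum ℂ fun b =>
    if i ∈ b.2 then
      ((-1 : ℂ) ^ (b.2.filter (· < i)).card) • Finsupp.lsingle (b.1, b.2.erase i)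
    else 0

/-- Left multiplication `m_i^ψ` by `ψᵢ`. -/
noncomputable def opPsi (i : Fin n) : Module.End ℂ (SuperPoly n) :=
  Finsupp.lsum ℂ fun b =>
    if i ∈ b.2 then 0
    else ((-1 : ℂ) ^ (b.2.filter (· < i)).card) • Finsupp.lsingle (b.1, insert i b.2)

/-- The operator `(∂^x)^α = ∏ᵢ ∂ᵢ^{αᵢ}`. -/
noncomputable def opXMon (α : Fin n →₀ ℕ) : Module.End ℂ (SuperPoly n) :=
  ((List.finRange n).map fun i => (opX n i) ^ (α i)).prod

/-- `θ_I(∂^θ) = ∂_{i₁} ∘ ⋯ ∘ ∂_{i_r}` for `I = {i₁ < ⋯ < i_r}`. -/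
noncomputable def opThetaMon (I : Finset (Fin n)) : Module.End ℂ (SuperPoly n) :=
  ((I.sort (· ≤ ·)).map (opTheta n)).prod

/-- `θ_I(m^ψ) = m_{i₁} ∘ ⋯ ∘ m_{i_r}` for `I = {i₁ < ⋯ < i_r}`. -/
noncomputable def opPsiMon (I : Finset (Fin n)) : Module.End ℂ (SuperPoly n) :=
  ((I.sort (· ≤ ·)).map (opPsi n)).prod

/-- The action `f · g := f̄(∂^x, ∂^θ)(g)`. -/
noncomputable def cdot (f g : SuperPoly n) : SuperPoly n :=
  f.sum fun b c => (starRingEnd ℂ) c • ((opXMon n b.1 * opThetaMon n b.2) g)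

/-- The action `f ⊙ h := f̄(∂^x, m^ψ)(h)`. -/
noncomputable def odot (f h : SuperPoly n) : SuperPoly n :=
  f.sum fun b c => (starRingEnd ℂ) c • ((opXMon n b.1 * opPsiMon n b.2) h)

/-- The Hodge star: the `k[x]`-linear map `θ_I ↦ (-1)^{deg(I)} ψ_{[n]∖I}` where
`deg(I) = Σ_{i∈I}(i-1)` (`i-1` is `i.val` for zero-based indices). -/
noncomputable def hodgeStar : Module.End ℂ (SuperPoly n) :=
  Finsupp.lsum ℂ fun b =>
    ((-1 : ℂ) ^ (∑ i ∈ b.2, (i : ℕ))) • Finsupp.lsingle (b.1, b.2ᶜ)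

lemma filter_card_compl (I : Finset (Fin n)) (i : Fin n) :
    (I.filter (· < i)).card + (Iᶜ.filter (· < i)).card = (i : ℕ) := by
  rw [← Finset.card_union_of_disjoint (by
    exact Finset.disjoint_filter_filter (disjoint_compl_right))]
  rw [← Finset.filter_union, Finset.union_compl]
  have : Finset.univ.filter (· < i) = Finset.Iio i := by ext j; simp
  rw [this, Fin.card_Iio]

lemma neg_pow_congr {a b : ℕ} (h : a % 2 = b % 2) : (-1:ℂ)^a = (-1:ℂ)^b := by
  rw [neg_one_pow_eq_pow_mod_two, neg_one_pow_eq_pow_mod_two (n := b), h]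

lemma star_theta (i : Fin n) :
    hodgeStar n * opTheta n i = opPsi n i * hodgeStar n := by
  apply Finsupp.lhom_ext
  rintro ⟨α, I⟩ c
  simp only [Module.End.mul_apply, hodgeStar, opTheta, opPsi, Finsupp.lsum_single,
    LinearMap.smul_apply, Finsupp.lsingle_apply, map_smul]
  by_cases hi : i ∈ I
  · rw [if_pos hi, if_neg (by simp [hi])]
    simp only [map_smul, Finsupp.lsum_single, LinearMap.smul_apply, Finsupp.lsingle_apply,
      Finsupp.smul_single, smul_smul, Finset.compl_erase]
    congr 1
    · rw [← pow_add, ← pow_add]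
      have h1 : ∑ j ∈ I.erase i, (j : ℕ) + (i:ℕ) = ∑ j ∈ I, (j : ℕ) :=
        Finset.sum_erase_add I _ hi
      have h2 := filter_card_compl n I i
      exact congrArg (· • c) (neg_pow_congr (by omega))
  · rw [if_neg hi, if_pos (by simp [hi])]
    simp

lemma commute_X (i : Fin n) : Commute (hodgeStar n) (opX n i) := by
  apply Finsupp.lhom_ext
  rintro ⟨α, I⟩ c
  simp only [Module.End.mul_apply, hodgeStar, opX, Finsupp.lsum_single,
    LinearMap.smul_apply, Finsupp.lsingle_apply, map_smul, smul_smul, mul_comm]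

lemma commute_XMon (α : Fin n →₀ ℕ) : Commute (hodgeStar n) (opXMon n α) := by
  apply Commute.list_prod_right
  intro y hy
  simp only [List.mem_map] at hy
  obtain ⟨i, -, rfl⟩ := hy
  exact (commute_X n i).pow_right _

lemma star_thetaList (l : List (Fin n)) :
    hodgeStar n * (l.map (opTheta n)).prod = (l.map (opPsi n)).prod * hodgeStar n := by
  induction l with
  | nil => simp
  | cons a l ih =>
    simp only [List.map_cons, List.prod_cons, ← mul_assoc, star_theta n a]
    rw [mul_assoc, ih, mul_assoc]

lemma star_op (α : Fin n →₀ ℕ) (I : Finset (Fin n)) :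
    hodgeStar n * (opXMon n α * opThetaMon n I)
      = (opXMon n α * opPsiMon n I) * hodgeStar n := by
  rw [← mul_assoc, (commute_XMon n α).eq, mul_assoc, opThetaMon, opPsiMon,
    star_thetaList, ← mul_assoc]

/-- `f ⊙ (★g) = ★(f · g)` for all super-polynomials `f, g`. -/
theorem odot_hodgeStar (f g : SuperPoly n) :
    odot n f (hodgeStar n g) = hodgeStar n (cdot n f g) := by
  unfold odot cdot
  rw [map_finsuppSum]
  apply Finsupp.sum_congr
  intro b _
  rw [map_smul]
  congr 1
  rw [← Module.End.mul_apply, ← star_op, Module.End.mul_apply]
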